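/- Inequality for the maximum of a pmf: for a pmf p on ℕ with p(i) → 0, one has I_d(p) > ‖p‖_∞² + (‖p‖_∞ − p(0))², where ‖p‖_∞ = sup_i p(i) and I_d is the discrete Fisher information. -/

import Mathlib

open Filter Real

lemma dfi_sq_sub_sqrt_le {a b : ℝ} (ha : 0 ≤ a) (hb : 0 ≤ b) :
    (Real.sqrt b - Real.sqrt a) ^ 2 ≤ a + b := by
  nlinarith [Real.sq_sqrt ha, Real.sq_sqrt hb,
    mul_nonneg (Real.sqrt_nonneg a) (Real.sqrt_nonneg b)]

lemma dfi_sq_add_sqrt_le {a b : ℝ} (ha : 0 ≤ a) (hb : 0 ≤ b) :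
    (Real.sqrt b + Real.sqrt a) ^ 2 ≤ 2 * (a + b) := by
  nlinarith [Real.sq_sqrt ha, Real.sq_sqrt hb, sq_nonneg (Real.sqrt a - Real.sqrt b)]

set_option maxHeartbeats 1000000 in
theorem dfi_max_inequality (p : ℕ → ℝ) (hp : ∀ i, 0 ≤ p i)
    (hsum : ∑' i, p i = 1) (htend : Tendsto p atTop (nhds 0)) :
    4 * ∑' i : ℕ, (Real.sqrt (p (i + 1)) - Real.sqrt (p i)) ^ 2 >
      (⨆ i, p i) ^ 2 + ((⨆ i, p i) - p 0) ^ 2 := by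
  -- p is summable
  have hps : Summable p := by
    by_contra h
    rw [tsum_eq_zero_of_not_summable h] at hsum
    norm_num at hsum
  -- some value is positive
  have hpos : ∃ j, 0 < p j := by
    by_contra h
    push_neg at h
    have h0 : ∀ i, p i = 0 := fun i => le_antisymm (h i) (hp i)
    simp [h0] at hsum
  obtain ⟨j, hj⟩ := hpos
  -- eventually p i < p j
  have hev : ∀ᶠ i in atTop, p i < p j := htend.eventually_lt_const hj
  obtain ⟨N, hN⟩ := eventually_atTop.1 hev
  -- argmax k
  obtain ⟨k, hk_mem, hk_max⟩ := Finset.exists_max_image (insert j (Finset.range N)) p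
    ⟨j, Finset.mem_insert_self j _⟩
  have hM : ∀ i, p i ≤ p k := by
    intro i
    by_cases hi : i ∈ insert j (Finset.range N)
    · exact hk_max i hi
    · have : N ≤ i := by
        by_contra h'
        exact hi (Finset.mem_insert_of_mem (Finset.mem_range.2 (by omega)))
      exact le_of_lt (lt_of_lt_of_le (hN i this) (hk_max j (Finset.mem_insert_self j _)))
  have hjk : p j ≤ p k := hM j
  have hMpos : 0 < p k := lt_of_lt_of_le hj hjk
  -- the sup equals p k
  have hbdd : BddAbove (Set.range p) := ⟨p k, by rintro _ ⟨i, rfl⟩; exact hM i⟩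
  have hMk : (⨆ i, p i) = p k := le_antisymm (ciSup_le hM) (le_ciSup hbdd k)
  -- summability of the Fisher terms
  have hΔnn : ∀ i : ℕ, (0:ℝ) ≤ (Real.sqrt (p (i + 1)) - Real.sqrt (p i)) ^ 2 :=
    fun i => sq_nonneg _
  have hΔsum : Summable (fun i : ℕ => (Real.sqrt (p (i + 1)) - Real.sqrt (p i)) ^ 2) := by
    apply Summable.of_nonneg_of_le hΔnn (fun i => dfi_sq_sub_sqrt_le (hp i) (hp (i+1)))
    exact hps.add ((summable_nat_add_iff 1).2 hps)
  -- tail sums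
  set Q : ℝ := ∑ i ∈ Finset.range k, p i with hQdef
  set R : ℝ := ∑' i, p (i + k) with hRdef
  have hptail : Summable (fun i => p (i + k)) := (summable_nat_add_iff k).2 hps
  have hQR : Q + R = 1 := by rw [hQdef, hRdef, Summable.sum_add_tsum_nat_add k hps, hsum]
  have hQnn : 0 ≤ Q := Finset.sum_nonneg fun i _ => hp i
  have hR1 : R ≤ 1 := by linarith
  -- R' = tail from k+1
  have hptail' : Summable (fun i => p (i + (k+1))) := (summable_nat_add_iff (k+1)).2 hps
  have hR' : ∑' i, p (i + (k + 1)) = R - p k := by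
    have h0 := Summable.tsum_eq_zero_add hptail
    have hcg : ∑' (b : ℕ), p (b + 1 + k) = ∑' i, p (i + (k + 1)) := by
      apply tsum_congr; intro b; congr 1; omega
    simp only [zero_add] at h0
    rw [hRdef]
    rw [h0, hcg]; ring
  have hMR : p k ≤ R := by
    have := tsum_nonneg (L := SummationFilter.unconditional ℕ) (fun i => hp (i + (k+1)))
    rw [hR'] at this; linarith
  -- split the Fisher sum
  set S₁ : ℝ := ∑ i ∈ Finset.range k, (Real.sqrt (p (i + 1)) - Real.sqrt (p i)) ^ 2 with hS₁def
  set S₂ : ℝ := ∑' i, (Real.sqrt (p (i + k + 1)) - Real.sqrt (p (i + k))) ^ 2 with hS₂def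
  have hS₂sum : Summable (fun i : ℕ => (Real.sqrt (p (i + k + 1)) - Real.sqrt (p (i + k))) ^ 2) :=
    (summable_nat_add_iff k).2 hΔsum
  have hsplit : ∑' i : ℕ, (Real.sqrt (p (i + 1)) - Real.sqrt (p i)) ^ 2 = S₁ + S₂ := by
    rw [hS₁def, hS₂def, ← Summable.sum_add_tsum_nat_add k hΔsum]
  have hS₁nn : 0 ≤ S₁ := Finset.sum_nonneg fun i _ => sq_nonneg _
  have hS₂nn : 0 ≤ S₂ := tsum_nonneg fun i => sq_nonneg _
  -- Part 1 : (p k - p 0)^2 ≤ 4 * S₁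
  have h1 : (p k - p 0) ^ 2 ≤ 4 * S₁ := by
    have htel : ∑ i ∈ Finset.range k, (p (i + 1) - p i) = p k - p 0 :=
      Finset.sum_range_sub p k
    have hfact : ∀ i : ℕ, p (i + 1) - p i =
        (Real.sqrt (p (i + 1)) - Real.sqrt (p i)) * (Real.sqrt (p (i + 1)) + Real.sqrt (p i)) := by
      intro i
      have h1 := Real.sq_sqrt (hp i)
      have h2 := Real.sq_sqrt (hp (i+1))
      linear_combination h1 - h2
    have hcs := Finset.sum_mul_sq_le_sq_mul_sq (Finset.range k)
      (fun i => Real.sqrt (p (i + 1)) - Real.sqrt (p i))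
      (fun i => Real.sqrt (p (i + 1)) + Real.sqrt (p i))
    have heq : ∑ i ∈ Finset.range k,
        (Real.sqrt (p (i + 1)) - Real.sqrt (p i)) * (Real.sqrt (p (i + 1)) + Real.sqrt (p i))
        = p k - p 0 := by
      rw [← htel]; exact Finset.sum_congr rfl fun i _ => (hfact i).symm
    rw [heq] at hcs
    -- bound the second factor
    have hC : ∑ i ∈ Finset.range k, (Real.sqrt (p (i + 1)) + Real.sqrt (p i)) ^ 2 ≤ 4 := by
      have hb : ∑ i ∈ Finset.range k, (Real.sqrt (p (i + 1)) + Real.sqrt (p i)) ^ 2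
          ≤ ∑ i ∈ Finset.range k, 2 * (p i + p (i + 1)) :=
        Finset.sum_le_sum fun i _ => dfi_sq_add_sqrt_le (hp i) (hp (i+1))
      have hshift : ∑ i ∈ Finset.range k, p (i + 1) = Q + p k - p 0 := by
        have := Finset.sum_range_succ' p k
        have h2 := Finset.sum_range_succ p k
        rw [hQdef]; linarith [this, h2]
      have hsum2 : ∑ i ∈ Finset.range k, 2 * (p i + p (i + 1)) = 2 * (Q + (Q + p k - p 0)) := by
        rw [← Finset.mul_sum, Finset.sum_add_distrib, hshift]
      have hp0 := hp 0
      calc ∑ i ∈ Finset.range k, (Real.sqrt (p (i + 1)) + Real.sqrt (p i)) ^ 2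
          ≤ 2 * (Q + (Q + p k - p 0)) := by rw [← hsum2]; exact hb
        _ ≤ 4 := by linarith
    have h4 : S₁ * (∑ i ∈ Finset.range k, (Real.sqrt (p (i + 1)) + Real.sqrt (p i)) ^ 2)
        ≤ S₁ * 4 := mul_le_mul_of_nonneg_left hC hS₁nn
    rw [← hS₁def] at hcs
    linarith
  -- Part 2 : p k ^ 2 < 4 * S₂
  have key : ∀ m : ℕ, (p (m + k) - p k) ^ 2 ≤ S₂ * (2 * (2 * R - p k)) := by
    intro m
    have htel : ∑ i ∈ Finset.range m, (p (i + 1 + k) - p (i + k)) = p (m + k) - p (0 + k) :=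
      Finset.sum_range_sub (fun i => p (i + k)) m
    have hidx : ∀ i : ℕ, i + 1 + k = i + k + 1 := fun i => by omega
    have hfact : ∀ i : ℕ, p (i + k + 1) - p (i + k) =
        (Real.sqrt (p (i + k + 1)) - Real.sqrt (p (i + k))) *
        (Real.sqrt (p (i + k + 1)) + Real.sqrt (p (i + k))) := by
      intro i
      have h1 := Real.sq_sqrt (hp (i + k))
      have h2 := Real.sq_sqrt (hp (i + k + 1))
      linear_combination h1 - h2
    have heq : ∑ i ∈ Finset.range m,
        (Real.sqrt (p (i + k + 1)) - Real.sqrt (p (i + k))) *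
        (Real.sqrt (p (i + k + 1)) + Real.sqrt (p (i + k))) = p (m + k) - p k := by
      simp only [hidx] at htel
      rw [Finset.sum_congr rfl fun i _ => hfact i] at htel
      simpa using htel
    have hcs := Finset.sum_mul_sq_le_sq_mul_sq (Finset.range m)
      (fun i => Real.sqrt (p (i + k + 1)) - Real.sqrt (p (i + k)))
      (fun i => Real.sqrt (p (i + k + 1)) + Real.sqrt (p (i + k)))
    rw [heq] at hcs
    have hg : ∑ i ∈ Finset.range m, (Real.sqrt (p (i + k + 1)) - Real.sqrt (p (i + k))) ^ 2 ≤ S₂ :=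
      Summable.sum_le_tsum (Finset.range m) (fun i _ => sq_nonneg _) hS₂sum
    have hh : ∑ i ∈ Finset.range m, (Real.sqrt (p (i + k + 1)) + Real.sqrt (p (i + k))) ^ 2
        ≤ 2 * (2 * R - p k) := by
      have hb : ∑ i ∈ Finset.range m, (Real.sqrt (p (i + k + 1)) + Real.sqrt (p (i + k))) ^ 2
          ≤ ∑ i ∈ Finset.range m, 2 * (p (i + k) + p (i + k + 1)) :=
        Finset.sum_le_sum fun i _ => dfi_sq_add_sqrt_le (hp (i + k)) (hp (i + k + 1))
      have ht1 : ∑ i ∈ Finset.range m, p (i + k) ≤ R :=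
        Summable.sum_le_tsum (Finset.range m) (fun i _ => hp _) hptail
      have ht2 : ∑ i ∈ Finset.range m, p (i + k + 1) ≤ R - p k := by
        have hcg : ∀ i : ℕ, p (i + k + 1) = p (i + (k + 1)) := fun i => rfl
        calc ∑ i ∈ Finset.range m, p (i + k + 1)
            = ∑ i ∈ Finset.range m, p (i + (k + 1)) := Finset.sum_congr rfl fun i _ => hcg i
          _ ≤ ∑' i, p (i + (k + 1)) := Summable.sum_le_tsum _ (fun i _ => hp _) hptail'
          _ = R - p k := hR'
      calc ∑ i ∈ Finset.range m, (Real.sqrt (p (i + k + 1)) + Real.sqrt (p (i + k))) ^ 2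
          ≤ ∑ i ∈ Finset.range m, 2 * (p (i + k) + p (i + k + 1)) := hb
        _ = 2 * (∑ i ∈ Finset.range m, p (i + k) + ∑ i ∈ Finset.range m, p (i + k + 1)) := by
            rw [← Finset.mul_sum, Finset.sum_add_distrib]
        _ ≤ 2 * (2 * R - p k) := by linarith
    have hgnn : 0 ≤ ∑ i ∈ Finset.range m,
        (Real.sqrt (p (i + k + 1)) - Real.sqrt (p (i + k))) ^ 2 :=
      Finset.sum_nonneg fun i _ => sq_nonneg _
    have hhnn : 0 ≤ ∑ i ∈ Finset.range m,
        (Real.sqrt (p (i + k + 1)) + Real.sqrt (p (i + k))) ^ 2 :=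
      Finset.sum_nonneg fun i _ => sq_nonneg _
    calc (p (m + k) - p k) ^ 2
        ≤ (∑ i ∈ Finset.range m, (Real.sqrt (p (i + k + 1)) - Real.sqrt (p (i + k))) ^ 2) *
          (∑ i ∈ Finset.range m, (Real.sqrt (p (i + k + 1)) + Real.sqrt (p (i + k))) ^ 2) := hcs
      _ ≤ S₂ * (2 * (2 * R - p k)) := mul_le_mul hg hh hhnn hS₂nn
  have hlim : Tendsto (fun m => (p (m + k) - p k) ^ 2) atTop (nhds ((0 - p k) ^ 2)) := by
    have h0 : Tendsto (fun m : ℕ => p (m + k)) atTop (nhds 0) :=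
      htend.comp (tendsto_add_atTop_nat k)
    exact (h0.sub_const (p k)).pow 2
  have h2' : (0 - p k) ^ 2 ≤ S₂ * (2 * (2 * R - p k)) :=
    le_of_tendsto hlim (Filter.Eventually.of_forall key)
  have h2'' : p k ^ 2 ≤ S₂ * (2 * (2 * R - p k)) := by
    have : (0 - p k) ^ 2 = p k ^ 2 := by ring
    linarith [h2']
  have hS₂pos : 0 < S₂ := by
    rcases lt_or_eq_of_le hS₂nn with h | h
    · exact h
    · exfalso; rw [← h] at h2''; simp at h2''; nlinarith
  have h2 : p k ^ 2 < 4 * S₂ := by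
    have hc4 : 2 * (2 * R - p k) < 4 := by linarith
    nlinarith
  -- conclude
  rw [hMk, hsplit]
  linarith
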